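/- Let E be a separable Banach space with its Borel σ-algebra, and let μ and ν be Borel probability measures on E with finite first moments, i.e., ∫‖x‖ dμ(x) < ∞ and ∫‖y‖ dν(y) < ∞. Define the kernel k(x,y) = ‖x‖ + ‖y‖ − ‖x − y‖. Then the squared Maximum Mean Discrepancy with kernel k satisfies MMD_k²(μ, ν) = 2 ∬ ‖x − y‖ dμ(x) dν(y) − ∬ ‖x − x'‖ dμ(x) dμ(x') − ∬ ‖y − y'‖ dν(y) dν(y'); that is, the squared energy distance between μ and ν equals the squared MMD with kernel k. -/

import Mathlib

open MeasureTheory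

lemma aux_int_sub {E : Type*} [NormedAddCommGroup E] [MeasurableSpace E] [BorelSpace E]
    (σ : Measure E) [IsProbabilityMeasure σ]
    (hσ : Integrable (fun y => ‖y‖) σ) (x : E) :
    Integrable (fun y => ‖x - y‖) σ := by
  have h1 : Integrable (fun y : E => ‖x‖ + ‖y‖) σ := (integrable_const _).add hσ
  refine h1.mono ((continuous_const.sub continuous_id).norm.aestronglyMeasurable) ?_
  filter_upwards with y
  have h1 : ‖x - y‖ ≤ ‖x‖ + ‖y‖ := norm_sub_le _ _
  have h2 : (0:ℝ) ≤ ‖x‖ + ‖y‖ := by positivity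
  simp [Real.norm_eq_abs, abs_of_nonneg (norm_nonneg _), abs_of_nonneg h2, h1]

lemma aux_int_outer {E : Type*} [NormedAddCommGroup E] [MeasurableSpace E] [BorelSpace E]
    [TopologicalSpace.SeparableSpace E]
    (ρ σ : Measure E) [IsProbabilityMeasure ρ] [IsProbabilityMeasure σ]
    (hρ : Integrable (fun y => ‖y‖) ρ) (hσ : Integrable (fun y => ‖y‖) σ) :
    Integrable (fun x => ∫ y, ‖x - y‖ ∂σ) ρ := by
  haveI : SecondCountableTopology E := by
    exact UniformSpace.secondCountable_of_separable E
  have hsm : StronglyMeasurable (Function.uncurry fun x y : E => ‖x - y‖) :=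
    (continuous_fst.sub continuous_snd).norm.stronglyMeasurable
  have hInt : Integrable (fun x : E => (∫ y, ‖y‖ ∂σ) + ‖x‖) ρ := (integrable_const _).add hρ
  refine hInt.mono (hsm.integral_prod_right.aestronglyMeasurable) ?_
  filter_upwards with x
  have h1 : ∫ y, ‖x - y‖ ∂σ ≤ ∫ y, ‖x‖ + ‖y‖ ∂σ := by
    refine integral_mono (aux_int_sub σ hσ x) ((integrable_const _).add hσ) ?_
    intro y; exact norm_sub_le _ _
  have h2 : ∫ y, ‖x‖ + ‖y‖ ∂σ = ‖x‖ + ∫ y, ‖y‖ ∂σ := by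
    rw [integral_add (integrable_const _) hσ, integral_const, probReal_univ]
    simp
  have h3 : (0:ℝ) ≤ ∫ y, ‖x - y‖ ∂σ := integral_nonneg fun y => norm_nonneg _
  have h4 : (0:ℝ) ≤ (∫ y, ‖y‖ ∂σ) + ‖x‖ :=
    add_nonneg (integral_nonneg fun y => norm_nonneg _) (norm_nonneg _)
  simp only [Real.norm_eq_abs, abs_of_nonneg h3, abs_of_nonneg h4]
  linarith

/-- On a separable Banach space, the squared MMD with the energy-distance
kernel `k(x,y) = ‖x‖ + ‖y‖ − ‖x − y‖` equals the squared energy distance. -/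
theorem stmt_7 {E : Type*} [NormedAddCommGroup E] [NormedSpace ℝ E] [CompleteSpace E]
    [TopologicalSpace.SeparableSpace E] [MeasurableSpace E] [BorelSpace E]
    (μ ν : Measure E) [IsProbabilityMeasure μ] [IsProbabilityMeasure ν]
    (hμ : Integrable (fun x => ‖x‖) μ) (hν : Integrable (fun y => ‖y‖) ν)
    (k : E → E → ℝ) (hk : ∀ x y, k x y = ‖x‖ + ‖y‖ - ‖x - y‖) :
    (∫ x, ∫ x', k x x' ∂μ ∂μ) + (∫ y, ∫ y', k y y' ∂ν ∂ν)
      - 2 * ∫ x, ∫ y, k x y ∂ν ∂μ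
    = 2 * (∫ x, ∫ y, ‖x - y‖ ∂ν ∂μ)
      - (∫ x, ∫ x', ‖x - x'‖ ∂μ ∂μ) - (∫ y, ∫ y', ‖y - y'‖ ∂ν ∂ν) := by
  have key : ∀ (ρ σ : Measure E) (_ : IsProbabilityMeasure ρ) (_ : IsProbabilityMeasure σ),
      Integrable (fun x => ‖x‖) ρ → Integrable (fun y => ‖y‖) σ →
      (∫ x, ∫ y, k x y ∂σ ∂ρ)
        = (∫ x, ‖x‖ ∂ρ) + (∫ y, ‖y‖ ∂σ) - ∫ x, ∫ y, ‖x - y‖ ∂σ ∂ρ := by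
    intro ρ σ hρp hσp hρ hσ
    have hin : ∀ x : E, (∫ y, k x y ∂σ) = ‖x‖ + (∫ y, ‖y‖ ∂σ) - ∫ y, ‖x - y‖ ∂σ := by
      intro x
      simp_rw [hk]
      have h1 : Integrable (fun y : E => ‖x‖ + ‖y‖) σ := (integrable_const _).add hσ
      rw [integral_sub h1 (aux_int_sub σ hσ x),
        integral_add (integrable_const _) hσ, integral_const, probReal_univ]
      simp
    simp_rw [hin]
    have h2 : Integrable (fun x : E => ‖x‖ + ∫ y, ‖y‖ ∂σ) ρ := hρ.add (integrable_const _)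
    rw [integral_sub h2 (aux_int_outer ρ σ hρ hσ),
      integral_add hρ (integrable_const _), integral_const, probReal_univ]
    simp
  rw [key μ μ ‹_› ‹_› hμ hμ, key ν ν ‹_› ‹_› hν hν, key μ ν ‹_› ‹_› hμ hν]
  ring
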